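/- Let y, γ ∈ ℝ, v > 0, β > 0, and define α(o) = log(exp(o) + 1) + 1 (SoftPlus activation plus one). Let L(o) = (1/2)·log(π/v) − α(o)·log(Ω) + (α(o) + 1/2)·log((y − γ)²·v + Ω) + log(Real.Gamma(α(o))) − log(Real.Gamma(α(o) + 1/2)), where Ω = 2β(1 + v). Then for every o ∈ ℝ, L has derivative at o equal to [log(1 + v·(γ − y)²/(2β(v + 1))) + ψ(α(o)) − ψ(α(o) + 1/2)] · (1/(1 + exp(−o))), where ψ(x) = deriv Real.Gamma x / Real.Gamma x is the digamma function. -/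

import Mathlib

open Real Filter

/-- SoftPlus activation plus one. -/
noncomputable def softplusAlpha (o : ℝ) : ℝ := Real.log (Real.exp o + 1) + 1

/-- The digamma function ψ(x) = Γ'(x)/Γ(x). -/
noncomputable def digamma (x : ℝ) : ℝ := deriv Real.Gamma x / Real.Gamma x

lemma logGamma_hasDerivAt {x : ℝ} (hx : 0 < x) :
    HasDerivAt (fun t => Real.log (Real.Gamma t)) (digamma x) x := by
  have hd : DifferentiableAt ℝ Real.Gamma x :=
    Real.differentiableAt_Gamma
      (fun n => (lt_of_le_of_lt (neg_nonpos.mpr (Nat.cast_nonneg n)) hx).ne')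
  exact hd.hasDerivAt.log (Real.Gamma_pos_of_pos hx).ne'

theorem stmt_0 (y γ v β : ℝ) (hv : 0 < v) (hβ : 0 < β) (o : ℝ) :
    HasDerivAt
      (fun o : ℝ =>
        (1 / 2) * Real.log (Real.pi / v)
          - softplusAlpha o * Real.log (2 * β * (1 + v))
          + (softplusAlpha o + 1 / 2) * Real.log ((y - γ) ^ 2 * v + 2 * β * (1 + v))
          + Real.log (Real.Gamma (softplusAlpha o))
          - Real.log (Real.Gamma (softplusAlpha o + 1 / 2)))
      ((Real.log (1 + v * (γ - y) ^ 2 / (2 * β * (v + 1)))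
          + digamma (softplusAlpha o) - digamma (softplusAlpha o + 1 / 2))
        * (1 / (1 + Real.exp (-o)))) o := by
  set a := softplusAlpha o with ha
  have hexp : (0:ℝ) < Real.exp o + 1 := by positivity
  have ha1 : 0 < a := by
    have h0 : 0 < Real.log (Real.exp o + 1) :=
      Real.log_pos (by linarith [Real.exp_pos o])
    have : a = Real.log (Real.exp o + 1) + 1 := rfl
    linarith
  have hs : HasDerivAt softplusAlpha (Real.exp o / (Real.exp o + 1)) o := by
    have h1 : HasDerivAt (fun x : ℝ => Real.exp x + 1) (Real.exp o) o :=
      (Real.hasDerivAt_exp o).add_const 1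
    have h2 := (h1.log (ne_of_gt hexp)).add_const 1
    exact h2
  set C1 := (1 / 2 : ℝ) * Real.log (Real.pi / v) with hC1
  set c2 := Real.log (2 * β * (1 + v)) with hc2
  set c3 := Real.log ((y - γ) ^ 2 * v + 2 * β * (1 + v)) with hc3
  have hg : HasDerivAt
      (fun x : ℝ => C1 - x * c2 + (x + 1 / 2) * c3 + Real.log (Real.Gamma x)
        - Real.log (Real.Gamma (x + 1 / 2)))
      (-c2 + c3 + digamma a - digamma (a + 1 / 2)) a := by
    have t1 : HasDerivAt (fun x : ℝ => C1 - x * c2) (-c2) a := by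
      exact ((hasDerivAt_const a C1).sub ((hasDerivAt_id a).mul_const c2)).congr_deriv (by simp)
    have t2 : HasDerivAt (fun x : ℝ => (x + 1 / 2) * c3) c3 a := by
      simpa using ((hasDerivAt_id a).add_const (1/2 : ℝ)).mul_const c3
    have t3 : HasDerivAt (fun x : ℝ => Real.log (Real.Gamma x)) (digamma a) a :=
      logGamma_hasDerivAt ha1
    have t4 : HasDerivAt (fun x : ℝ => Real.log (Real.Gamma (x + 1 / 2)))
        (digamma (a + 1 / 2)) a := by
      have := (logGamma_hasDerivAt (show (0:ℝ) < a + 1/2 by linarith)).comp a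
        ((hasDerivAt_id a).add_const (1/2 : ℝ))
      exact this.congr_deriv (by simp)
    have := ((t1.add t2).add t3).sub t4
    exact this
  have total := hg.comp o hs
  have hΩ : (0:ℝ) < 2 * β * (1 + v) := by positivity
  have hN : (0:ℝ) < (y - γ) ^ 2 * v + 2 * β * (1 + v) := by positivity
  have hlog : Real.log (1 + v * (γ - y) ^ 2 / (2 * β * (v + 1))) = c3 - c2 := by
    rw [hc2, hc3,
      show (1 + v * (γ - y) ^ 2 / (2 * β * (v + 1))
          = ((y - γ) ^ 2 * v + 2 * β * (1 + v)) / (2 * β * (1 + v))) from by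
        field_simp; ring,
      Real.log_div hN.ne' hΩ.ne']
  have hss : Real.exp o / (Real.exp o + 1) = 1 / (1 + Real.exp (-o)) := by
    rw [Real.exp_neg]
    field_simp
  have heq : ((Real.log (1 + v * (γ - y) ^ 2 / (2 * β * (v + 1)))
          + digamma a - digamma (a + 1 / 2)) * (1 / (1 + Real.exp (-o))))
      = (-c2 + c3 + digamma a - digamma (a + 1 / 2)) * (Real.exp o / (Real.exp o + 1)) := by
    rw [hlog, hss]; ring
  rw [heq]
  exact total
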